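/- Let G be a graph that splits along a path P of length l into induced subgraphs G_1 and G_2, where every interior vertex of P has degree 2 in G, and G_1 is bipartite. Then I_G = (I_{G_1} + I_{G_2}) : f^∞, where f is the squarefree monomial equal to the product of the edge variables of P with even indices (when the edges of P are labelled h_1,…,h_l along the path). -/

import Mathlib

open MvPolynomial

/-- The toric ideal of a graph: the graph has vertex set `V` and edges indexed by `E` via
`ε : E → Sym2 V`; the toric ideal is the kernel of the `K`-algebra map
`K[e : E] → K[x : V]` sending the edge variable `e` to the product of the variables of its
two endpoints. -/
noncomputable def graphToricIdeal (K : Type*) [Field K] {V E : Type*} (ε : E → Sym2 V) :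
    Ideal (MvPolynomial E K) :=
  RingHom.ker (MvPolynomial.aeval
    (fun e => Sym2.lift ⟨fun a b => (X a * X b : MvPolynomial V K),
      fun a b => by ring⟩ (ε e)) : MvPolynomial E K →ₐ[K] MvPolynomial V K)

namespace ToricSplit

open Finsupp

section defs
variable {V E : Type*} (K : Type*) [Field K] (ε : E → Sym2 V)

/-- the vertex-incidence finsupp of an edge -/
noncomputable def inc (e : E) : V →₀ ℕ :=
  Sym2.lift ⟨fun a b => single a 1 + single b 1, fun a b => by simp [add_comm]⟩ (ε e)

lemma inc_eq {e : E} {x y : V} (h : ε e = s(x, y)) :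
    inc ε e = single x 1 + single y 1 := by
  rw [inc, h, Sym2.lift_mk]

/-- the map on exponent vectors induced by the edge map -/
noncomputable def Adeg (u : E →₀ ℕ) : V →₀ ℕ := u.sum fun e k => k • inc ε e

lemma Adeg_zero : Adeg ε 0 = 0 := Finsupp.sum_zero_index

lemma Adeg_add (u v : E →₀ ℕ) : Adeg ε (u + v) = Adeg ε u + Adeg ε v :=
  Finsupp.sum_add_index' (fun _ => zero_smul _ _) (fun _ b₁ b₂ => add_smul b₁ b₂ _)

lemma Adeg_single (e : E) (k : ℕ) : Adeg ε (single e k) = k • inc ε e :=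
  Finsupp.sum_single_index (zero_smul _ _)

lemma Adeg_smul (n : ℕ) (u : E →₀ ℕ) : Adeg ε (n • u) = n • Adeg ε u := by
  induction n with
  | zero => simp [Adeg_zero]
  | succ n ih => rw [succ_nsmul, succ_nsmul, Adeg_add, ih]

/-- the edge-variable to vertex-polynomial assignment appearing in `graphToricIdeal` -/
noncomputable def edgeVal : E → MvPolynomial V K := fun e =>
  Sym2.lift ⟨fun a b => (X a * X b : MvPolynomial V K), fun a b => by ring⟩ (ε e)

lemma edgeVal_eq {e : E} {x y : V} (h : ε e = s(x, y)) :
    edgeVal K ε e = X x * X y := by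
  rw [edgeVal, h, Sym2.lift_mk]

lemma sym2_exists_rep (q : Sym2 V) : ∃ x y, q = s(x, y) :=
  Sym2.exists.mp ⟨q, rfl⟩

lemma edgeVal_eq_monomial (e : E) : edgeVal K ε e = monomial (inc ε e) (1 : K) := by
  obtain ⟨x, y, h⟩ := sym2_exists_rep (ε e)
  rw [edgeVal_eq K ε h, inc_eq ε h, X, X, monomial_mul, one_mul]

lemma aeval_monomial_eq (u : E →₀ ℕ) (c : K) :
    aeval (edgeVal K ε) (monomial u c) = monomial (Adeg ε u) c := by
  rw [aeval_monomial]
  have h : (u.prod fun e k => edgeVal K ε e ^ k) = monomial (Adeg ε u) (1 : K) := by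
    classical
    induction u using Finsupp.induction with
    | zero => simp [Adeg_zero]
    | single_add e k u he hk ih =>
        rw [Finsupp.prod_add_index (fun _ _ => pow_zero _)
              (fun _ _ b₁ b₂ => pow_add _ b₁ b₂),
            ih, Finsupp.prod_single_index (h := fun e k => edgeVal K ε e ^ k) (pow_zero _),
            edgeVal_eq_monomial, monomial_pow, one_pow, monomial_mul, one_mul,
            Adeg_add, Adeg_single]
  rw [h, algebraMap_eq, C_mul_monomial, mul_one]


lemma Adeg_apply (u : E →₀ ℕ) (w : V) :
    Adeg ε u w = u.sum fun e k => k * inc ε e w := by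
  rw [Adeg, Finsupp.sum_apply]
  rfl

lemma inc_apply_ne_zero (e : E) (w : V) (h : inc ε e w ≠ 0) : w ∈ ε e := by
  obtain ⟨x, y, hxy⟩ := sym2_exists_rep (ε e)
  rw [inc_eq ε hxy] at h
  rw [hxy, Sym2.mem_iff]
  by_contra hc
  push_neg at hc
  apply h
  classical
  rw [Finsupp.add_apply, Finsupp.single_apply, Finsupp.single_apply,
    if_neg (fun hx => hc.1 hx.symm), if_neg (fun hy => hc.2 hy.symm), add_zero]

lemma Adeg_apply_eq_zero (u : E →₀ ℕ) (w : V)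
    (h : ∀ e ∈ u.support, w ∉ ε e) : Adeg ε u w = 0 := by
  rw [Adeg_apply]
  apply Finset.sum_eq_zero
  intro e he
  show u e * inc ε e w = 0
  by_cases hz : inc ε e w = 0
  · rw [hz, mul_zero]
  · exact absurd (inc_apply_ne_zero ε e w hz) (h e he)


end defs

section kernel
variable {V E : Type*} (K : Type*) [Field K] (ε : E → Sym2 V)

/-- every element of the kernel lies in any ideal containing all balanced binomials -/
theorem ker_le_of_binomials (J : Ideal (MvPolynomial E K))
    (hJ : ∀ u v : E →₀ ℕ, Adeg ε u = Adeg ε v →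
      monomial u (1 : K) - monomial v 1 ∈ J) :
    ∀ (g : MvPolynomial E K), aeval (edgeVal K ε) g = 0 → g ∈ J := by
  classical
  suffices H : ∀ (n : ℕ) (g : MvPolynomial E K), aeval (edgeVal K ε) g = 0 →
      g.support.card ≤ n → g ∈ J by
    exact fun g hg => H g.support.card g hg le_rfl
  intro n
  induction n with
  | zero =>
      intro g _ hcard
      have : g.support = ∅ := Finset.card_eq_zero.mp (Nat.le_zero.mp hcard)
      rw [MvPolynomial.support_eq_empty.mp this]
      exact J.zero_mem
  | succ n ih =>
      intro g hg hcard
      by_cases hg0 : g = 0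
      · rw [hg0]; exact J.zero_mem
      obtain ⟨u, hu⟩ := Finset.nonempty_iff_ne_empty.mpr
        (fun h => hg0 (MvPolynomial.support_eq_empty.mp h))
      -- the fiber sum over `Adeg · = Adeg u` vanishes
      have hrepr : aeval (edgeVal K ε) g
          = ∑ w ∈ g.support, monomial (Adeg ε w) (coeff w g) := by
        conv_lhs => rw [g.as_sum]
        rw [map_sum]
        exact Finset.sum_congr rfl fun w _ => aeval_monomial_eq K ε w (coeff w g)
      have hsum : ∑ w ∈ g.support.filter (fun w => Adeg ε w = Adeg ε u),
          coeff w g = 0 := by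
        have h0 : ∑ w ∈ g.support, coeff (Adeg ε u) (monomial (Adeg ε w) (coeff w g)) = 0 := by
          rw [← MvPolynomial.coeff_sum, ← hrepr, hg, coeff_zero]
        rw [Finset.sum_filter]
        exact Eq.trans
          (Finset.sum_congr rfl fun w _ => (coeff_monomial _ _ _).symm) h0
      -- find a second member of the fiber
      have hufib : u ∈ g.support.filter (fun w => Adeg ε w = Adeg ε u) :=
        Finset.mem_filter.mpr ⟨hu, rfl⟩
      have hvex : ∃ v ∈ g.support.filter (fun w => Adeg ε w = Adeg ε u), v ≠ u := by
        by_contra hno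
        push_neg at hno
        have hsingle : g.support.filter (fun w => Adeg ε w = Adeg ε u) = {u} :=
          Finset.eq_singleton_iff_unique_mem.mpr ⟨hufib, hno⟩
        rw [hsingle, Finset.sum_singleton] at hsum
        exact (MvPolynomial.mem_support_iff.mp hu) hsum
      obtain ⟨v, hvfib, hvu⟩ := hvex
      obtain ⟨hvsupp, hvdeg⟩ := Finset.mem_filter.mp hvfib
      set c := coeff u g with hc
      set b : MvPolynomial E K := monomial u (1 : K) - monomial v 1 with hb
      have hbJ : b ∈ J := hJ u v hvdeg.symm
      set g' : MvPolynomial E K := g - C c * b with hg'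
      have hφ' : aeval (edgeVal K ε) g' = 0 := by
        rw [hg', hb, map_sub, map_mul, map_sub, aeval_C,
          aeval_monomial_eq, aeval_monomial_eq, hvdeg, sub_self, mul_zero,
          sub_zero, hg]
      have hcoeff : ∀ w, coeff w g' = coeff w g
          - c * ((if u = w then (1:K) else 0) - if v = w then (1:K) else 0) := by
        intro w
        rw [hg', hb, coeff_sub, coeff_C_mul, coeff_sub, coeff_monomial,
          coeff_monomial]
      have hsupp' : g'.support ⊆ g.support.erase u := by
        intro w hw
        have hw' := MvPolynomial.mem_support_iff.mp hw
        rw [Finset.mem_erase]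
        by_cases hwu : w = u
        · exfalso
          apply hw'
          rw [hcoeff, hwu, if_pos rfl, if_neg (fun h => hvu h), sub_zero,
            mul_one, ← hc, sub_self]
        refine ⟨hwu, ?_⟩
        by_contra hwg
        apply hw'
        have h1 : coeff w g = 0 := MvPolynomial.notMem_support_iff.mp hwg
        have hwv : ¬ v = w := fun h => hwg (h ▸ hvsupp)
        rw [hcoeff, h1, if_neg (fun h => hwu h.symm), if_neg hwv, sub_zero,
          mul_zero, sub_zero]
      have hcard' : g'.support.card ≤ n := by
        have h1 : (g.support.erase u).card < g.support.card :=
          Finset.card_erase_lt_of_mem hu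
        have h2 := Finset.card_le_card hsupp'
        omega
      have := ih g' hφ' hcard'
      have hgeq : g = g' + C c * b := by rw [hg']; ring
      rw [hgeq]
      exact J.add_mem this (Ideal.mul_mem_left _ _ hbJ)


lemma mem_toric_iff (g : MvPolynomial E K) :
    g ∈ graphToricIdeal K ε ↔ aeval (edgeVal K ε) g = 0 :=
  RingHom.mem_ker

section comp
variable {E' : Type*}

lemma inc_comp (j : E' → E) (ε' : E' → Sym2 V) (hj : ∀ e', ε' e' = ε (j e'))
    (e' : E') : inc ε (j e') = inc ε' e' := by
  rw [inc, inc, hj e']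

lemma edgeVal_comp (j : E' → E) (ε' : E' → Sym2 V)
    (hj : ∀ e', ε' e' = ε (j e')) : edgeVal K ε ∘ j = edgeVal K ε' := by
  funext e'
  show edgeVal K ε (j e') = edgeVal K ε' e'
  simp only [edgeVal]
  rw [hj e']

lemma Adeg_mapDomain (j : E' → E) (ε' : E' → Sym2 V)
    (hj : ∀ e', ε' e' = ε (j e')) (u' : E' →₀ ℕ) :
    Adeg ε (mapDomain j u') = Adeg ε' u' := by
  classical
  induction u' using Finsupp.induction with
  | zero => simp [Adeg_zero]
  | single_add e k u he hk ih =>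
      rw [mapDomain_add, Adeg_add, Adeg_add, ih, mapDomain_single,
        Adeg_single, Adeg_single, inc_comp ε j ε' hj]
end comp

section subtype
variable (P : E → Prop)

lemma mapDomain_subtypeDomain (u : E →₀ ℕ) (hu : ∀ e ∈ u.support, P e) :
    mapDomain (Subtype.val : Subtype P → E) (subtypeDomain P u) = u := by
  classical
  ext a
  by_cases hPa : P a
  · have := mapDomain_apply (Subtype.val_injective (p := P)) (subtypeDomain P u)
      ⟨a, hPa⟩
    rw [this]
    rfl
  · rw [mapDomain_notin_range _ _ (by rintro ⟨x, rfl⟩; exact hPa x.2)]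
    by_contra h
    exact hPa (hu a (Finsupp.mem_support_iff.mpr fun h' => h h'.symm))

lemma binomial_mem_map (u v : E →₀ ℕ) (hu : ∀ e ∈ u.support, P e)
    (hv : ∀ e ∈ v.support, P e) (hbal : Adeg ε u = Adeg ε v) :
    monomial u (1 : K) - monomial v 1 ∈
      Ideal.map (MvPolynomial.rename
        (Subtype.val : Subtype P → E)).toRingHom
        (graphToricIdeal K (fun e : Subtype P => ε e.val)) := by
  set ε' : Subtype P → Sym2 V := fun e => ε e.val with hε'
  have hj : ∀ e' : Subtype P, ε' e' = ε e'.val := fun _ => rfl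
  set u' := subtypeDomain P u with hu'
  set v' := subtypeDomain P v with hv'
  have hmu : mapDomain (Subtype.val : Subtype P → E) u' = u :=
    mapDomain_subtypeDomain P u hu
  have hmv : mapDomain (Subtype.val : Subtype P → E) v' = v :=
    mapDomain_subtypeDomain P v hv
  have hker : monomial u' (1 : K) - monomial v' 1 ∈ graphToricIdeal K ε' := by
    rw [mem_toric_iff, map_sub, aeval_monomial_eq, aeval_monomial_eq,
      ← Adeg_mapDomain ε Subtype.val ε' hj u',
      ← Adeg_mapDomain ε Subtype.val ε' hj v', hmu, hmv, hbal, sub_self]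
  have himg := Ideal.mem_map_of_mem
    (MvPolynomial.rename (Subtype.val : Subtype P → E)).toRingHom hker
  have heq : (MvPolynomial.rename (Subtype.val : Subtype P → E)).toRingHom
      (monomial u' (1 : K) - monomial v' 1) = monomial u 1 - monomial v 1 := by
    show MvPolynomial.rename (Subtype.val : Subtype P → E)
      (monomial u' (1 : K) - monomial v' 1) = _
    rw [map_sub, rename_monomial, rename_monomial, hmu, hmv]
  rwa [heq] at himg

lemma map_le_ker :
    Ideal.map (MvPolynomial.rename (Subtype.val : Subtype P → E)).toRingHom
        (graphToricIdeal K (fun e : Subtype P => ε e.val))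
      ≤ graphToricIdeal K ε := by
  rw [Ideal.map_le_iff_le_comap]
  intro h hh
  have : aeval (edgeVal K ε) (rename (Subtype.val : Subtype P → E) h) = 0 := by
    rw [aeval_rename,
      edgeVal_comp K ε Subtype.val (fun e : Subtype P => ε e.val) (fun _ => rfl)]
    exact (mem_toric_iff K _ h).mp hh
  exact Ideal.mem_comap.mpr ((mem_toric_iff K ε _).mpr this)


end subtype
end kernel

section path
variable {V E : Type*} (ε : E → Sym2 V) (hinj : Function.Injective ε)
  (l : ℕ) (p : Fin (l + 1) → V) (hp : Function.Injective p)
  (pe : Fin l → E) (hpe : ∀ t : Fin l, ε (pe t) = s(p t.castSucc, p t.succ))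

include hinj hp hpe in
/-- at an interior path vertex, the only incident edges are the two path edges -/
lemma interior_edges
    (hdeg : ∀ t : Fin (l + 1), t ≠ 0 → t ≠ Fin.last l →
      Nat.card {e : E // p t ∈ ε e} = 2)
    (i : ℕ) (hi0 : 0 < i) (hil : i < l) (e : E)
    (he : p ⟨i, by omega⟩ ∈ ε e) :
    e = pe ⟨i - 1, by omega⟩ ∨ e = pe ⟨i, hil⟩ := by
  have hi : i < l + 1 := by omega
  set t1 : Fin l := ⟨i - 1, by omega⟩ with ht1
  set t2 : Fin l := ⟨i, hil⟩ with ht2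
  have h1succ : (t1.succ : Fin (l+1)) = ⟨i, hi⟩ := by
    apply Fin.ext
    rw [Fin.val_succ]
    show (i - 1) + 1 = i
    omega
  have h2cast : (t2.castSucc : Fin (l+1)) = ⟨i, hi⟩ := by
    apply Fin.ext
    rw [Fin.coe_castSucc]
  have hmem1 : p ⟨i, hi⟩ ∈ ε (pe t1) := by
    rw [hpe t1, ← h1succ, Sym2.mem_iff]; right; rfl
  have hmem2 : p ⟨i, hi⟩ ∈ ε (pe t2) := by
    rw [hpe t2, ← h2cast, Sym2.mem_iff]; left; rfl
  have hne : pe t1 ≠ pe t2 := by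
    intro h
    have h' := congrArg ε h
    rw [hpe, hpe, Sym2.eq_iff] at h'
    rcases h' with ⟨h1, _⟩ | ⟨h1, h2⟩
    · have h3 := congrArg Fin.val (hp h1)
      rw [Fin.coe_castSucc, Fin.coe_castSucc] at h3
      have : i - 1 = i := h3
      omega
    · have h3 := congrArg Fin.val (hp h1)
      rw [Fin.coe_castSucc, Fin.val_succ] at h3
      have : i - 1 = i + 1 := h3
      omega
  have ht0 : (⟨i, hi⟩ : Fin (l+1)) ≠ 0 := by
    intro h; have := congrArg Fin.val h; simp at this; omega
  have htl : (⟨i, hi⟩ : Fin (l+1)) ≠ Fin.last l := by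
    intro h; have := congrArg Fin.val h; simp [Fin.last] at this; omega
  obtain ⟨x, y, hxy, hcov⟩ := Nat.card_eq_two_iff.mp (hdeg ⟨i, hi⟩ ht0 htl)
  have hmm : ∀ (a : E) (ha : p ⟨i, hi⟩ ∈ ε a),
      (⟨a, ha⟩ : {e : E // p ⟨i, hi⟩ ∈ ε e}) = x ∨
      (⟨a, ha⟩ : {e : E // p ⟨i, hi⟩ ∈ ε e}) = y := by
    intro a ha
    have : (⟨a, ha⟩ : {e : E // p ⟨i, hi⟩ ∈ ε e}) ∈ ({x, y} : Set _) := by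
      rw [hcov]; exact Set.mem_univ _
    simpa using this
  have hne' : (⟨pe t1, hmem1⟩ : {e : E // p ⟨i, hi⟩ ∈ ε e}) ≠ ⟨pe t2, hmem2⟩ :=
    fun h => hne (congrArg Subtype.val h)
  rcases hmm (pe t1) hmem1 with h1x | h1y <;>
    rcases hmm (pe t2) hmem2 with h2x | h2y <;>
    rcases hmm e he with hex | hey
  · exact absurd (h1x.trans h2x.symm) hne'
  · exact absurd (h1x.trans h2x.symm) hne'
  · left; exact congrArg Subtype.val (hex.trans h1x.symm)
  · right; exact congrArg Subtype.val (hey.trans h2y.symm)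
  · right; exact congrArg Subtype.val (hex.trans h2x.symm)
  · left; exact congrArg Subtype.val (hey.trans h1y.symm)
  · exact absurd (h1y.trans h2y.symm) hne'
  · exact absurd (h1y.trans h2y.symm) hne'


include hpe in
/-- colors alternate along the path -/
lemma color_alternate (c : V → Bool)
    (hc : ∀ t : Fin l, c (p t.castSucc) ≠ c (p t.succ)) :
    ∀ i : ℕ, ∀ h : i < l + 1,
      c (p ⟨i, h⟩) = if Even i then c (p 0) else !(c (p 0)) := by
  intro i
  induction i with
  | zero =>
      intro h
      rw [if_pos Even.zero]
      congr 1
  | succ i ih =>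
      intro h
      have hi : i < l + 1 := by omega
      have hil : i < l := by omega
      have hstep := hc ⟨i, hil⟩
      have hcast : ((⟨i, hil⟩ : Fin l).castSucc : Fin (l+1)) = ⟨i, hi⟩ := by
        apply Fin.ext; rw [Fin.coe_castSucc]
      have hsucc : ((⟨i, hil⟩ : Fin l).succ : Fin (l+1)) = ⟨i + 1, h⟩ := by
        apply Fin.ext; rw [Fin.val_succ]
      rw [hcast, hsucc, ih hi] at hstep
      rcases Nat.even_or_odd i with he | ho
      · rw [if_pos he] at hstep
        rw [if_neg (by simp [Nat.even_add_one, he])]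
        rcases Bool.eq_false_or_eq_true (c (p ⟨i+1, h⟩)) with h1 | h1 <;>
          rcases Bool.eq_false_or_eq_true (c (p 0)) with h2 | h2 <;>
          simp [h1, h2] at hstep ⊢
      · rw [if_neg (by simp [Nat.odd_iff.mp ho, Nat.even_iff])] at hstep
        rw [if_pos (by simpa [Nat.even_add_one] using (Nat.not_even_iff_odd.mpr ho))]
        rcases Bool.eq_false_or_eq_true (c (p ⟨i+1, h⟩)) with h1 | h1 <;>
          rcases Bool.eq_false_or_eq_true (c (p 0)) with h2 | h2 <;>
          simp [h1, h2] at hstep ⊢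

end path

section path3
variable {V : Type*} (l : ℕ) (p : Fin (l + 1) → V)

/-- the alternating telescoping identity along the path -/
lemma telescope :
    (∑ t ∈ Finset.univ.filter (fun t : Fin l => ¬ Odd (t : ℕ)),
        (single (p t.castSucc) (1 : ℤ) + single (p t.succ) 1))
      - (∑ t ∈ Finset.univ.filter (fun t : Fin l => Odd (t : ℕ)),
        (single (p t.castSucc) (1 : ℤ) + single (p t.succ) 1))
    = single (p 0) 1
      + (if Even l then (-1 : ℤ) else 1) • single (p (Fin.last l)) 1 := by
  classical
  set X : Fin l → (V →₀ ℤ) :=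
    fun t => single (p t.castSucc) (1 : ℤ) + single (p t.succ) 1 with hX
  set f : ℕ → (V →₀ ℤ) := fun i =>
    ((-1 : ℤ) ^ i) • (single (p ⟨min i l, by omega⟩) (1 : ℤ)
      + single (p ⟨min (i + 1) l, by omega⟩) 1) with hf
  set G : ℕ → (V →₀ ℤ) := fun i =>
    ((-1 : ℤ) ^ i) • single (p ⟨min i l, by omega⟩) (1 : ℤ) with hG
  have step1 :
      (∑ t ∈ Finset.univ.filter (fun t : Fin l => ¬ Odd (t : ℕ)), X t)
        - (∑ t ∈ Finset.univ.filter (fun t : Fin l => Odd (t : ℕ)), X t)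
      = ∑ t : Fin l, ((-1 : ℤ) ^ (t : ℕ)) • X t := by
    rw [← Finset.sum_filter_add_sum_filter_not Finset.univ
      (fun t : Fin l => Odd (t : ℕ)) (fun t => ((-1 : ℤ) ^ (t : ℕ)) • X t)]
    have h1 : ∀ t ∈ Finset.univ.filter (fun t : Fin l => Odd (t : ℕ)),
        ((-1 : ℤ) ^ (t : ℕ)) • X t = - X t := by
      intro t ht
      rw [(Finset.mem_filter.mp ht).2.neg_one_pow, neg_smul, one_smul]
    have h2 : ∀ t ∈ Finset.univ.filter (fun t : Fin l => ¬ Odd (t : ℕ)),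
        ((-1 : ℤ) ^ (t : ℕ)) • X t = X t := by
      intro t ht
      rw [(Nat.not_odd_iff_even.mp (Finset.mem_filter.mp ht).2).neg_one_pow,
        one_smul]
    rw [Finset.sum_congr rfl h1, Finset.sum_congr rfl h2, Finset.sum_neg_distrib]
    abel
  rw [step1]
  have step2 : ∑ t : Fin l, ((-1 : ℤ) ^ (t : ℕ)) • X t
      = ∑ i ∈ Finset.range l, f i := by
    rw [← Fin.sum_univ_eq_sum_range f l]
    refine Finset.sum_congr rfl fun t _ => ?_
    have e1 : (⟨min (t : ℕ) l, by omega⟩ : Fin (l + 1)) = t.castSucc := by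
      apply Fin.ext
      show min (t : ℕ) l = (t : ℕ)
      omega
    have e2 : (⟨min ((t : ℕ) + 1) l, by omega⟩ : Fin (l + 1)) = t.succ := by
      apply Fin.ext
      show min ((t : ℕ) + 1) l = (t : ℕ) + 1
      have := t.isLt
      omega
    rw [hf, hX]
    simp only
    rw [e1, e2]
  rw [step2]
  have step3 : ∀ i ∈ Finset.range l, f i = G i - G (i + 1) := by
    intro i hi
    rw [hf, hG]
    simp only
    rw [pow_succ, smul_add]
    rw [mul_comm, neg_one_mul, neg_smul, sub_neg_eq_add]
  rw [Finset.sum_congr rfl step3, Finset.sum_range_sub' G l]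
  have hG0 : G 0 = single (p 0) 1 := by
    rw [hG]
    simp only [pow_zero, one_smul]
    have : (⟨min 0 l, by omega⟩ : Fin (l+1)) = 0 := by
      apply Fin.ext
      show min 0 l = 0
      omega
    rw [this]
  have hGl : G l = ((-1 : ℤ) ^ l) • single (p (Fin.last l)) 1 := by
    rw [hG]
    simp only
    have : (⟨min l l, by omega⟩ : Fin (l+1)) = Fin.last l := by
      apply Fin.ext
      show min l l = (Fin.last l : Fin (l+1)).val
      rw [Fin.val_last]
      omega
    rw [this]
  rw [hG0, hGl]
  rcases Nat.even_or_odd l with he | ho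
  · rw [if_pos he, he.neg_one_pow, one_smul, neg_smul, one_smul, sub_eq_add_neg]
  · rw [if_neg (Nat.not_even_iff_odd.mpr ho), ho.neg_one_pow, neg_smul, one_smul,
      sub_neg_eq_add]


end path3

section main
variable {V E : Type*} (K : Type*) [Field K] (ε : E → Sym2 V)

/-- cast a `ℕ`-finsupp to a `ℤ`-finsupp -/
noncomputable def Zc (x : V →₀ ℕ) : V →₀ ℤ := x.mapRange (fun n : ℕ => (n : ℤ)) (by simp)

lemma Zc_apply (x : V →₀ ℕ) (w : V) : Zc x w = (x w : ℤ) := Finsupp.mapRange_apply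

lemma Zc_inj {x y : V →₀ ℕ} (h : Zc x = Zc y) : x = y := by
  ext w
  have := DFunLike.congr_fun h w
  rw [Zc_apply, Zc_apply] at this
  exact_mod_cast this

lemma Zc_add (x y : V →₀ ℕ) : Zc (x + y) = Zc x + Zc y := by
  ext w
  rw [Zc_apply, Finsupp.add_apply, Finsupp.add_apply, Zc_apply, Zc_apply]
  push_cast
  ring

lemma Zc_smul (n : ℕ) (x : V →₀ ℕ) : Zc (n • x) = n • Zc x := by
  ext w
  rw [Zc_apply, Finsupp.smul_apply, Finsupp.smul_apply, Zc_apply,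
    smul_eq_mul, nsmul_eq_mul]
  push_cast
  ring

lemma Zc_single (w : V) (k : ℕ) : Zc (single w k) = single w (k : ℤ) := by
  classical
  ext v
  rw [Zc_apply, Finsupp.single_apply, Finsupp.single_apply]
  split <;> simp

lemma Zc_zero : Zc (0 : V →₀ ℕ) = 0 := by
  ext v; rw [Zc_apply]; simp

section core
variable (hinj : Function.Injective ε) (hnd : ∀ e, ¬ (ε e).IsDiag)
  (l : ℕ) (hl : 0 < l) (p : Fin (l + 1) → V) (hp : Function.Injective p)
  (pe : Fin l → E) (hpe : ∀ t : Fin l, ε (pe t) = s(p t.castSucc, p t.succ))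
  (W₁ W₂ : Set V)
  (hcover : W₁ ∪ W₂ = Set.univ) (hint : W₁ ∩ W₂ = Set.range p)
  (hedges : ∀ e : E, (∀ x ∈ ε e, x ∈ W₁) ∨ (∀ x ∈ ε e, x ∈ W₂))
  (hdeg : ∀ t : Fin (l + 1), t ≠ 0 → t ≠ Fin.last l →
      Nat.card {e : E // p t ∈ ε e} = 2)
  (hbip : ∃ c : V → Bool, ∀ e : E, (∀ x ∈ ε e, x ∈ W₁) →
      ∀ x y, ε e = s(x, y) → c x ≠ c y)

include hinj hnd hl hp hpe hcover hint hedges hdeg hbip in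
set_option maxHeartbeats 1000000 in
theorem core_aux
    (aγ aρ bγ bρ : E →₀ ℕ)
    (haγ : ∀ e ∈ aγ.support, ∀ x ∈ ε e, x ∈ W₁)
    (haρ : ∀ e ∈ aρ.support, ¬ ∀ x ∈ ε e, x ∈ W₁)
    (hbγ : ∀ e ∈ bγ.support, ∀ x ∈ ε e, x ∈ W₁)
    (hbρ : ∀ e ∈ bρ.support, ¬ ∀ x ∈ ε e, x ∈ W₁)
    (hab : Adeg ε (aγ + aρ) = Adeg ε (bγ + bρ))
    (hα : 0 ≤ (Adeg ε aγ (p 0) : ℤ) - (Adeg ε bγ (p 0) : ℤ)) :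
    ∃ n : ℕ,
      monomial ((aγ + aρ) + n • (∑ t ∈ Finset.univ.filter
          (fun t : Fin l => Odd (t : ℕ)), single (pe t) 1)) (1 : K)
        - monomial ((bγ + bρ) + n • (∑ t ∈ Finset.univ.filter
          (fun t : Fin l => Odd (t : ℕ)), single (pe t) 1)) 1 ∈
      Ideal.map (MvPolynomial.rename
            (Subtype.val : {e : E // ∀ x ∈ ε e, x ∈ W₁} → E)).toRingHom
          (graphToricIdeal K (fun e : {e : E // ∀ x ∈ ε e, x ∈ W₁} => ε e.val)) ⊔
        Ideal.map (MvPolynomial.rename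
            (Subtype.val : {e : E // ∀ x ∈ ε e, x ∈ W₂} → E)).toRingHom
          (graphToricIdeal K (fun e : {e : E // ∀ x ∈ ε e, x ∈ W₂} => ε e.val)) := by
  classical
  obtain ⟨c, hc⟩ := hbip
  set P1 : E → Prop := fun e => ∀ x ∈ ε e, x ∈ W₁ with hP1
  set P2 : E → Prop := fun e => ∀ x ∈ ε e, x ∈ W₂ with hP2
  set Fo : E →₀ ℕ := ∑ t ∈ Finset.univ.filter
      (fun t : Fin l => Odd (t : ℕ)), single (pe t) 1 with hFo
  set Fe : E →₀ ℕ := ∑ t ∈ Finset.univ.filter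
      (fun t : Fin l => ¬ Odd (t : ℕ)), single (pe t) 1 with hFe
  -- basic facts about path vertices/edges
  have hrange : ∀ t : Fin (l + 1), p t ∈ W₁ ∧ p t ∈ W₂ := by
    intro t
    have : p t ∈ W₁ ∩ W₂ := by rw [hint]; exact ⟨t, rfl⟩
    exact ⟨this.1, this.2⟩
  have hpathP1 : ∀ t : Fin l, P1 (pe t) := by
    intro t x hx
    rw [hpe t, Sym2.mem_iff] at hx
    rcases hx with h | h <;> rw [h]
    · exact (hrange t.castSucc).1
    · exact (hrange t.succ).1
  have hpathP2 : ∀ t : Fin l, P2 (pe t) := by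
    intro t x hx
    rw [hpe t, Sym2.mem_iff] at hx
    rcases hx with h | h <;> rw [h]
    · exact (hrange t.castSucc).2
    · exact (hrange t.succ).2
  have hcpath : ∀ t : Fin l, c (p t.castSucc) ≠ c (p t.succ) :=
    fun t => hc (pe t) (hpathP1 t) _ _ (hpe t)
  have hp0l : p 0 ≠ p (Fin.last l) := by
    intro h
    have := congrArg Fin.val (hp h)
    rw [Fin.val_last] at this
    simp at this
    omega
  -- the discrepancy is supported at the two endpoints of the path
  have hK1 : ∀ w : V, w ≠ p 0 → w ≠ p (Fin.last l) →
      (Adeg ε aγ w : ℤ) - (Adeg ε bγ w : ℤ) = 0 := by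
    intro w hw0 hwl
    have habw : Adeg ε aγ w + Adeg ε aρ w = Adeg ε bγ w + Adeg ε bρ w := by
      have := DFunLike.congr_fun hab w
      rw [Adeg_add, Adeg_add, Finsupp.add_apply, Finsupp.add_apply] at this
      exact this
    by_cases hwp : w ∈ Set.range p
    · -- interior path vertex: no edges outside `P1` touch it
      obtain ⟨t, ht⟩ := hwp
      have ht0 : (t : ℕ) ≠ 0 := by
        intro h
        apply hw0
        rw [← ht]
        congr 1
        apply Fin.ext
        simpa using h
      have htl : (t : ℕ) ≠ l := by
        intro h
        apply hwl
        rw [← ht]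
        congr 1
        apply Fin.ext
        rw [Fin.val_last]
        exact h
      have hti : (0:ℕ) < t.val ∧ t.val < l := by
        have := t.isLt
        omega
      have hzero : ∀ (u : E →₀ ℕ), (∀ e ∈ u.support, ¬ P1 e) →
          Adeg ε u w = 0 := by
        intro u hu
        apply Adeg_apply_eq_zero
        intro e he hwe
        have hmem : p ⟨t.val, by omega⟩ ∈ ε e := by
          rw [show (⟨t.val, by omega⟩ : Fin (l+1)) = t from Fin.ext rfl, ht]
          exact hwe
        rcases interior_edges ε hinj l p hp pe hpe hdeg t.val hti.1 hti.2
            e hmem with h | h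
        · exact hu e he (h ▸ hpathP1 _)
        · exact hu e he (h ▸ hpathP1 _)
      rw [hzero aρ haρ, hzero bρ hbρ, add_zero, add_zero] at habw
      omega
    · -- non-path vertex
      by_cases hw1 : w ∈ W₁
      · -- w only meets P1 edges
        have hw2 : w ∉ W₂ := by
          intro hw2
          exact hwp (by rw [← hint]; exact ⟨hw1, hw2⟩)
        have hzero : ∀ (u : E →₀ ℕ), (∀ e ∈ u.support, ¬ P1 e) →
            Adeg ε u w = 0 := by
          intro u hu
          apply Adeg_apply_eq_zero
          intro e he hwe
          rcases hedges e with h | h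
          · exact hu e he h
          · exact hw2 (h w hwe)
        rw [hzero aρ haρ, hzero bρ hbρ, add_zero, add_zero] at habw
        omega
      · -- w is not even in W₁, so no P1 edge meets it
        have hzero : ∀ (u : E →₀ ℕ), (∀ e ∈ u.support, P1 e) →
            Adeg ε u w = 0 := by
          intro u hu
          apply Adeg_apply_eq_zero
          intro e he hwe
          exact hw1 (hu e he w hwe)
        rw [hzero aγ haγ, hzero bγ hbγ]
        simp
  -- name the two endpoint discrepancies
  set α : ℤ := (Adeg ε aγ (p 0) : ℤ) - (Adeg ε bγ (p 0) : ℤ) with hαdef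
  set β : ℤ := (Adeg ε aγ (p (Fin.last l)) : ℤ)
      - (Adeg ε bγ (p (Fin.last l)) : ℤ) with hβdef
  set DD : V →₀ ℤ := Zc (Adeg ε aγ) - Zc (Adeg ε bγ) with hDDdef
  have hDDapply : ∀ w, DD w = (Adeg ε aγ w : ℤ) - (Adeg ε bγ w : ℤ) := by
    intro w
    rw [hDDdef, Finsupp.sub_apply, Zc_apply, Zc_apply]
  have hDD : DD = single (p 0) α + single (p (Fin.last l)) β := by
    ext w
    rw [hDDapply, Finsupp.add_apply, Finsupp.single_apply, Finsupp.single_apply]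
    by_cases hw0 : w = p 0
    · rw [if_pos hw0.symm, if_neg (by rw [hw0]; exact fun h => hp0l h.symm)]
      rw [hw0, add_zero]
    · rw [if_neg (fun h => hw0 h.symm)]
      by_cases hwl : w = p (Fin.last l)
      · rw [if_pos hwl.symm, hwl, zero_add]
      · rw [if_neg (fun h => hwl h.symm), hK1 w hw0 hwl, add_zero]
  -- the bipartite counting argument
  have hβ : β = if Even l then -α else α := by
    set TZ : Bool → (V →₀ ℤ) → ℤ :=
      fun s x => x.sum fun w k => if c w = s then k else 0 with hTZ
    have hTZadd : ∀ s (x y : V →₀ ℤ), TZ s (x + y) = TZ s x + TZ s y := by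
      intro s x y
      apply Finsupp.sum_add_index'
      · intro a; split <;> rfl
      · intro a b1 b2; split <;> simp
    have hTZsub : ∀ s (x y : V →₀ ℤ), TZ s (x - y) = TZ s x - TZ s y := by
      intro s x y
      apply Finsupp.sum_sub_index
      intro a b1 b2; split <;> simp
    have hTZsingle : ∀ s w (k : ℤ), TZ s (single w k) = if c w = s then k else 0 := by
      intro s w k
      apply Finsupp.sum_single_index
      split <;> rfl
    have hTZA : ∀ (u : E →₀ ℕ), (∀ e ∈ u.support, P1 e) → ∀ s,
        TZ s (Zc (Adeg ε u)) = u.sum fun _ k => (k : ℤ) := by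
      intro u
      induction u using Finsupp.induction with
      | zero =>
          intro _ s
          rw [Adeg_zero, Zc_zero, Finsupp.sum_zero_index]
          exact Finsupp.sum_zero_index
      | single_add e k u he hk ih =>
          intro hsup s
          have hmeme : e ∈ (Finsupp.single e k + u).support := by
            rw [Finsupp.mem_support_iff, Finsupp.add_apply, Finsupp.single_apply,
              if_pos rfl]
            have : u e = 0 := Finsupp.notMem_support_iff.mp he
            omega
          have hP1e : P1 e := hsup e hmeme
          have hsup' : ∀ e' ∈ u.support, P1 e' := by
            intro e' he'
            apply hsup
            rw [Finsupp.mem_support_iff, Finsupp.add_apply, Finsupp.single_apply,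
              if_neg (fun h => he (by rw [h]; exact he')), zero_add]
            exact Finsupp.mem_support_iff.mp he'
          obtain ⟨x, y, hxy⟩ := sym2_exists_rep (ε e)
          have hcxy : c x ≠ c y := hc e hP1e x y hxy
          have hifs : ((if c x = s then (k:ℤ) else 0)
              + (if c y = s then (k:ℤ) else 0)) = (k : ℤ) := by
            rcases Bool.eq_false_or_eq_true (c x) with h1 | h1 <;>
              rcases Bool.eq_false_or_eq_true (c y) with h2 | h2 <;>
              rw [h1, h2] <;> try exact absurd (h1.trans h2.symm) hcxy
            · rcases Bool.eq_false_or_eq_true s with h3 | h3 <;> rw [h3]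
              · rw [if_pos rfl, if_neg (by decide), add_zero]
              · rw [if_neg (by decide), if_pos rfl, zero_add]
            · rcases Bool.eq_false_or_eq_true s with h3 | h3 <;> rw [h3]
              · rw [if_neg (by decide), if_pos rfl, zero_add]
              · rw [if_pos rfl, if_neg (by decide), add_zero]
          rw [Adeg_add, Zc_add, hTZadd, ih hsup' s, Adeg_single,
            inc_eq ε hxy, smul_add, smul_single, smul_single, smul_eq_mul,
            mul_one, Zc_add, Zc_single, Zc_single, hTZadd, hTZsingle,
            hTZsingle, hifs,
            Finsupp.sum_add_index' (h := fun _ (k : ℕ) => (k : ℤ))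
              (fun _ => Nat.cast_zero) (fun _ b1 b2 => Nat.cast_add b1 b2),
            Finsupp.sum_single_index (h := fun _ (k : ℕ) => (k : ℤ))
              Nat.cast_zero]
    have h1 : ∀ s, TZ s DD
        = (aγ.sum fun _ k => (k:ℤ)) - (bγ.sum fun _ k => (k:ℤ)) := by
      intro s
      rw [hDDdef, hTZsub, hTZA aγ haγ s, hTZA bγ hbγ s]
    have h2 : ∀ s, TZ s DD = (if c (p 0) = s then α else 0)
        + (if c (p (Fin.last l)) = s then β else 0) := by
      intro s
      rw [hDD, hTZadd, hTZsingle, hTZsingle]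
    have htt : ∀ s s', TZ s DD = TZ s' DD := by
      intro s s'; rw [h1, h1]
    have hcl : c (p (Fin.last l)) = if Even l then c (p 0) else !(c (p 0)) := by
      have hca := color_alternate ε l p pe hpe c hcpath l (by omega)
      have hfin : (⟨l, by omega⟩ : Fin (l+1)) = Fin.last l := by
        apply Fin.ext
        rw [Fin.val_last]
      rw [hfin] at hca
      exact hca
    rcases Nat.even_or_odd l with hev | hod
    · rw [if_pos hev]
      rw [if_pos hev] at hcl
      have e1 := h2 (c (p 0))
      have e2 := h2 (!(c (p 0)))
      rw [if_pos rfl, hcl, if_pos rfl] at e1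
      rw [if_neg (by simp), hcl, if_neg (by simp)] at e2
      have := (htt (c (p 0)) (!(c (p 0)))).symm.trans e1
      rw [e2] at this
      linarith
    · rw [if_neg (Nat.not_even_iff_odd.mpr hod)]
      rw [if_neg (Nat.not_even_iff_odd.mpr hod)] at hcl
      have e1 := h2 (c (p 0))
      have e2 := h2 (!(c (p 0)))
      rw [if_pos rfl, hcl, if_neg (by simp)] at e1
      rw [if_neg (by simp), hcl, if_pos rfl] at e2
      have := (htt (c (p 0)) (!(c (p 0)))).symm.trans e1
      rw [e2] at this
      linarith
  -- the key telescoping identity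
  have hKey : Zc (Adeg ε Fe) - Zc (Adeg ε Fo)
      = single (p 0) 1
        + (if Even l then (-1 : ℤ) else 1) • single (p (Fin.last l)) 1 := by
    have hAF : ∀ (s : Finset (Fin l)), Zc (Adeg ε (∑ t ∈ s, single (pe t) 1))
        = ∑ t ∈ s, (single (p t.castSucc) (1:ℤ) + single (p t.succ) 1) := by
      intro s
      induction s using Finset.induction_on with
      | empty => rw [Finset.sum_empty, Adeg_zero, Zc_zero, Finset.sum_empty]
      | @insert x s hx ih =>
          rw [Finset.sum_insert hx, Adeg_add, Zc_add, ih, Finset.sum_insert hx]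
          congr 1
          rw [Adeg_single, one_smul, inc_eq ε (hpe _), Zc_add, Zc_single,
            Zc_single, Nat.cast_one]
    rw [hFe, hFo, hAF, hAF]
    exact telescope l p
  -- choose n and prove the two balance equations
  refine ⟨α.toNat, ?_⟩
  set n : ℕ := α.toNat with hn
  have hnα : (n : ℤ) = α := Int.toNat_of_nonneg hα
  have hDD2 : Zc (Adeg ε aγ) - Zc (Adeg ε bγ)
      = n • Zc (Adeg ε Fe) - n • Zc (Adeg ε Fo) := by
    rcases Nat.even_or_odd l with hev | hod
    · rw [if_pos hev] at hKey
      rw [hβ, if_pos hev] at hDD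
      rw [← smul_sub, hKey, ← hDDdef, hDD]
      ext w
      simp only [Finsupp.add_apply, Finsupp.smul_apply, Finsupp.single_apply,
        smul_eq_mul, nsmul_eq_mul]
      split_ifs with h0 hlw hlw
      · exact absurd (h0.trans hlw.symm) hp0l
      · rw [hnα]; ring
      · rw [hnα]; ring
      · ring
    · rw [if_neg (Nat.not_even_iff_odd.mpr hod)] at hKey
      rw [hβ, if_neg (Nat.not_even_iff_odd.mpr hod)] at hDD
      rw [← smul_sub, hKey, ← hDDdef, hDD]
      ext w
      simp only [Finsupp.add_apply, Finsupp.smul_apply, Finsupp.single_apply,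
        smul_eq_mul, nsmul_eq_mul]
      split_ifs with h0 hlw hlw
      · exact absurd (h0.trans hlw.symm) hp0l
      · rw [hnα]; ring
      · rw [hnα]; ring
      · ring
  have hBal1 : Adeg ε (aγ + n • Fo) = Adeg ε (bγ + n • Fe) := by
    apply Zc_inj
    rw [Adeg_add, Adeg_add, Adeg_smul, Adeg_smul, Zc_add, Zc_add,
      Zc_smul, Zc_smul]
    linear_combination (norm := module) hDD2
  have hBal2 : Adeg ε (aρ + n • Fe) = Adeg ε (bρ + n • Fo) := by
    apply Zc_inj
    have habZ : Zc (Adeg ε aγ) + Zc (Adeg ε aρ)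
        = Zc (Adeg ε bγ) + Zc (Adeg ε bρ) := by
      rw [← Zc_add, ← Zc_add, ← Adeg_add, ← Adeg_add, hab]
    rw [Adeg_add, Adeg_add, Adeg_smul, Adeg_smul, Zc_add, Zc_add,
      Zc_smul, Zc_smul]
    linear_combination (norm := module) habZ - hDD2
  -- support facts
  have hFosup : ∀ e ∈ Fo.support, ∃ t : Fin l, e = pe t := by
    intro e he
    rw [hFo] at he
    obtain ⟨t, _, ht⟩ := Finsupp.mem_support_finset_sum e he
    exact ⟨t, Finset.mem_singleton.mp (Finsupp.support_single_subset ht)⟩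
  have hFesup : ∀ e ∈ Fe.support, ∃ t : Fin l, e = pe t := by
    intro e he
    rw [hFe] at he
    obtain ⟨t, _, ht⟩ := Finsupp.mem_support_finset_sum e he
    exact ⟨t, Finset.mem_singleton.mp (Finsupp.support_single_subset ht)⟩
  have hsupport1 : ∀ (u : E →₀ ℕ), (∀ e ∈ u.support, P1 e) →
      ∀ e ∈ (u + n • Fo).support, P1 e := by
    intro u hu e he
    rcases Finset.mem_union.mp (Finsupp.support_add he) with h | h
    · exact hu e h
    · obtain ⟨t, ht⟩ := hFosup e (Finsupp.support_smul h)
      exact ht ▸ hpathP1 t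
  have hsupport1e : ∀ (u : E →₀ ℕ), (∀ e ∈ u.support, P1 e) →
      ∀ e ∈ (u + n • Fe).support, P1 e := by
    intro u hu e he
    rcases Finset.mem_union.mp (Finsupp.support_add he) with h | h
    · exact hu e h
    · obtain ⟨t, ht⟩ := hFesup e (Finsupp.support_smul h)
      exact ht ▸ hpathP1 t
  have hsupport2 : ∀ (u : E →₀ ℕ), (∀ e ∈ u.support, ¬ P1 e) →
      ∀ e ∈ (u + n • Fo).support, P2 e := by
    intro u hu e he
    rcases Finset.mem_union.mp (Finsupp.support_add he) with h | h
    · rcases hedges e with h1 | h2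
      · exact absurd h1 (hu e h)
      · exact h2
    · obtain ⟨t, ht⟩ := hFosup e (Finsupp.support_smul h)
      exact ht ▸ hpathP2 t
  have hsupport2e : ∀ (u : E →₀ ℕ), (∀ e ∈ u.support, ¬ P1 e) →
      ∀ e ∈ (u + n • Fe).support, P2 e := by
    intro u hu e he
    rcases Finset.mem_union.mp (Finsupp.support_add he) with h | h
    · rcases hedges e with h1 | h2
      · exact absurd h1 (hu e h)
      · exact h2
    · obtain ⟨t, ht⟩ := hFesup e (Finsupp.support_smul h)
      exact ht ▸ hpathP2 t
  -- the two binomials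
  have h1 : monomial (aγ + n • Fo) (1 : K) - monomial (bγ + n • Fe) 1 ∈
      Ideal.map (MvPolynomial.rename
          (Subtype.val : {e : E // ∀ x ∈ ε e, x ∈ W₁} → E)).toRingHom
        (graphToricIdeal K (fun e : {e : E // ∀ x ∈ ε e, x ∈ W₁} => ε e.val)) :=
    binomial_mem_map K ε P1 _ _ (hsupport1 aγ haγ) (hsupport1e bγ hbγ) hBal1
  have h2 : monomial (aρ + n • Fe) (1 : K) - monomial (bρ + n • Fo) 1 ∈
      Ideal.map (MvPolynomial.rename
          (Subtype.val : {e : E // ∀ x ∈ ε e, x ∈ W₂} → E)).toRingHom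
        (graphToricIdeal K (fun e : {e : E // ∀ x ∈ ε e, x ∈ W₂} => ε e.val)) :=
    binomial_mem_map K ε P2 _ _ (hsupport2e aρ haρ) (hsupport2 bρ hbρ) hBal2
  -- assemble
  have hiden : monomial ((aγ + aρ) + n • Fo) (1 : K)
        - monomial ((bγ + bρ) + n • Fo) 1
      = monomial aρ 1 * (monomial (aγ + n • Fo) 1 - monomial (bγ + n • Fe) 1)
        + monomial bγ 1 * (monomial (aρ + n • Fe) 1 - monomial (bρ + n • Fo) 1)
      := by
    rw [mul_sub, mul_sub, monomial_mul, monomial_mul, monomial_mul,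
      monomial_mul]
    simp only [one_mul, mul_one]
    have e1 : aρ + (aγ + n • Fo) = (aγ + aρ) + n • Fo := by
      rw [← add_assoc, add_comm aρ aγ]
    have e2 : bγ + (aρ + n • Fe) = aρ + (bγ + n • Fe) := by
      rw [← add_assoc, add_comm bγ aρ, add_assoc]
    have e3 : bγ + (bρ + n • Fo) = (bγ + bρ) + n • Fo := (add_assoc _ _ _).symm
    rw [e1, e2, e3]
    ring
  rw [hiden]
  exact Submodule.add_mem _
    (Ideal.mul_mem_left _ _ (Ideal.mem_sup_left h1))
    (Ideal.mul_mem_left _ _ (Ideal.mem_sup_right h2))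


include hinj hnd hl hp hpe hcover hint hedges hdeg hbip in
set_option maxHeartbeats 1000000 in
theorem core (a b : E →₀ ℕ) (hab : Adeg ε a = Adeg ε b) :
    ∃ n : ℕ,
      monomial (a + n • (∑ t ∈ Finset.univ.filter
          (fun t : Fin l => Odd (t : ℕ)), single (pe t) 1)) (1 : K)
        - monomial (b + n • (∑ t ∈ Finset.univ.filter
          (fun t : Fin l => Odd (t : ℕ)), single (pe t) 1)) 1 ∈
      Ideal.map (MvPolynomial.rename
            (Subtype.val : {e : E // ∀ x ∈ ε e, x ∈ W₁} → E)).toRingHom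
          (graphToricIdeal K (fun e : {e : E // ∀ x ∈ ε e, x ∈ W₁} => ε e.val)) ⊔
        Ideal.map (MvPolynomial.rename
            (Subtype.val : {e : E // ∀ x ∈ ε e, x ∈ W₂} → E)).toRingHom
          (graphToricIdeal K (fun e : {e : E // ∀ x ∈ ε e, x ∈ W₂} => ε e.val)) := by
  classical
  set P1 : E → Prop := fun e => ∀ x ∈ ε e, x ∈ W₁ with hP1
  set aγ : E →₀ ℕ := a.filter P1 with haγdef
  set aρ : E →₀ ℕ := a.filter (fun e => ¬ P1 e) with haρdef
  set bγ : E →₀ ℕ := b.filter P1 with hbγdef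
  set bρ : E →₀ ℕ := b.filter (fun e => ¬ P1 e) with hbρdef
  have hsa : aγ + aρ = a := Finsupp.filter_pos_add_filter_neg a P1
  have hsb : bγ + bρ = b := Finsupp.filter_pos_add_filter_neg b P1
  have hmγ : ∀ (u : E →₀ ℕ), ∀ e ∈ (u.filter P1).support, ∀ x ∈ ε e, x ∈ W₁ := by
    intro u e he
    rw [Finsupp.support_filter, Finset.mem_filter] at he
    exact he.2
  have hmρ : ∀ (u : E →₀ ℕ), ∀ e ∈ (u.filter (fun e => ¬ P1 e)).support,
      ¬ ∀ x ∈ ε e, x ∈ W₁ := by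
    intro u e he
    rw [Finsupp.support_filter, Finset.mem_filter] at he
    exact he.2
  have hab' : Adeg ε (aγ + aρ) = Adeg ε (bγ + bρ) := by rw [hsa, hsb]; exact hab
  rcases le_or_gt 0 ((Adeg ε aγ (p 0) : ℤ) - (Adeg ε bγ (p 0) : ℤ)) with hα | hα
  · obtain ⟨n, hn⟩ := core_aux K ε hinj hnd l hl p hp pe hpe W₁ W₂ hcover hint
      hedges hdeg hbip aγ aρ bγ bρ (hmγ a) (hmρ a) (hmγ b) (hmρ b) hab' hα
    rw [hsa, hsb] at hn
    exact ⟨n, hn⟩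
  · have hα' : 0 ≤ (Adeg ε bγ (p 0) : ℤ) - (Adeg ε aγ (p 0) : ℤ) := by omega
    obtain ⟨n, hn⟩ := core_aux K ε hinj hnd l hl p hp pe hpe W₁ W₂ hcover hint
      hedges hdeg hbip bγ bρ aγ aρ (hmγ b) (hmρ b) (hmγ a) (hmρ a) hab'.symm hα'
    rw [hsa, hsb] at hn
    refine ⟨n, ?_⟩
    have := Submodule.neg_mem _ hn
    rwa [neg_sub] at this


end core

lemma prod_X_eq_monomial {ι : Type*} (s : Finset ι) (σ : ι → E) :
    (∏ i ∈ s, (X (σ i) : MvPolynomial E K))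
      = monomial (∑ i ∈ s, single (σ i) 1) 1 := by
  classical
  induction s using Finset.induction_on with
  | empty =>
      rw [Finset.prod_empty, Finset.sum_empty]
      rfl
  | @insert x s hx ih =>
      rw [Finset.prod_insert hx, Finset.sum_insert hx, ih]
      rw [X, monomial_mul, one_mul]


end main
end ToricSplit

open ToricSplit Finsupp in
/-- Let `G` be a graph that splits along a path `P` of length `l ≥ 1`
(with vertices `p 0, …, p l` and edges `pe 0, …, pe (l-1)`, `pe t = h_{t+1}` in the paper's
1-based labelling) into induced subgraphs `G₁` (on `W₁`, bipartite) and `G₂` (on `W₂`),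
where every interior vertex of `P` has degree `2` in `G`.  Then
`I_G = (I_{G₁} + I_{G₂}) : f^∞`, where `f` is the squarefree monomial equal to the product
of the edge variables of `P` with even (1-based) index. -/
theorem toric_splittings_stmt19 {V E : Type*} (K : Type*) [Field K]
    (ε : E → Sym2 V) (hinj : Function.Injective ε) (hnd : ∀ e, ¬ (ε e).IsDiag)
    (l : ℕ) (hl : 0 < l) (p : Fin (l + 1) → V) (hp : Function.Injective p)
    (pe : Fin l → E) (hpe : ∀ t : Fin l, ε (pe t) = s(p t.castSucc, p t.succ))
    (W₁ W₂ : Set V)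
    (hcover : W₁ ∪ W₂ = Set.univ) (hint : W₁ ∩ W₂ = Set.range p)
    (hedges : ∀ e : E, (∀ x ∈ ε e, x ∈ W₁) ∨ (∀ x ∈ ε e, x ∈ W₂))
    (hdeg : ∀ t : Fin (l + 1), t ≠ 0 → t ≠ Fin.last l →
      Nat.card {e : E // p t ∈ ε e} = 2)
    (hbip : ∃ c : V → Bool, ∀ e : E, (∀ x ∈ ε e, x ∈ W₁) →
      ∀ x y, ε e = s(x, y) → c x ≠ c y) :
    ∀ g : MvPolynomial E K,
      g ∈ graphToricIdeal K ε ↔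
        ∃ m : ℕ,
          (∏ t ∈ Finset.univ.filter (fun t : Fin l => Odd (t : ℕ)), X (pe t)) ^ m * g ∈
            Ideal.map (MvPolynomial.rename
                  (Subtype.val : {e : E // ∀ x ∈ ε e, x ∈ W₁} → E)).toRingHom
                (graphToricIdeal K (fun e : {e : E // ∀ x ∈ ε e, x ∈ W₁} => ε e.val)) ⊔
              Ideal.map (MvPolynomial.rename
                  (Subtype.val : {e : E // ∀ x ∈ ε e, x ∈ W₂} → E)).toRingHom
                (graphToricIdeal K (fun e : {e : E // ∀ x ∈ ε e, x ∈ W₂} => ε e.val)) := by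
  intro g
  set S : Ideal (MvPolynomial E K) :=
    Ideal.map (MvPolynomial.rename
          (Subtype.val : {e : E // ∀ x ∈ ε e, x ∈ W₁} → E)).toRingHom
        (graphToricIdeal K (fun e : {e : E // ∀ x ∈ ε e, x ∈ W₁} => ε e.val)) ⊔
      Ideal.map (MvPolynomial.rename
          (Subtype.val : {e : E // ∀ x ∈ ε e, x ∈ W₂} → E)).toRingHom
        (graphToricIdeal K (fun e : {e : E // ∀ x ∈ ε e, x ∈ W₂} => ε e.val))
    with hS
  set f : MvPolynomial E K :=
    ∏ t ∈ Finset.univ.filter (fun t : Fin l => Odd (t : ℕ)), X (pe t) with hfdef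
  set Fo : E →₀ ℕ := ∑ t ∈ Finset.univ.filter
      (fun t : Fin l => Odd (t : ℕ)), single (pe t) 1 with hFo
  have hfm : f = monomial Fo 1 := prod_X_eq_monomial K _ pe
  constructor
  · intro hg
    set J : Ideal (MvPolynomial E K) :=
      { carrier := {h | ∃ m : ℕ, f ^ m * h ∈ S}
        add_mem' := by
          rintro x y ⟨m, hm⟩ ⟨m', hm'⟩
          refine ⟨m + m', ?_⟩
          have hid : f ^ (m + m') * (x + y)
              = f ^ m' * (f ^ m * x) + f ^ m * (f ^ m' * y) := by ring
          rw [hid]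
          exact S.add_mem (Ideal.mul_mem_left _ _ hm) (Ideal.mul_mem_left _ _ hm')
        zero_mem' := ⟨0, by simpa using S.zero_mem⟩
        smul_mem' := by
          rintro r x ⟨m, hm⟩
          refine ⟨m, ?_⟩
          have hid : f ^ m * (r • x) = r * (f ^ m * x) := by
            rw [smul_eq_mul]; ring
          rw [hid]
          exact Ideal.mul_mem_left _ _ hm } with hJ
    have hbin : ∀ u v : E →₀ ℕ, Adeg ε u = Adeg ε v →
        monomial u (1 : K) - monomial v 1 ∈ J := by
      intro u v huv
      obtain ⟨n, hn⟩ := core K ε hinj hnd l hl p hp pe hpe W₁ W₂ hcover hint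
        hedges hdeg hbip u v huv
      refine ⟨n, ?_⟩
      have hfn : f ^ n = monomial (n • Fo) (1 : K) := by
        rw [hfm, monomial_pow, one_pow]
      rw [hfn, mul_sub, monomial_mul, monomial_mul, one_mul,
        add_comm (n • Fo) u, add_comm (n • Fo) v]
      exact hn
    exact ker_le_of_binomials K ε J hbin g ((mem_toric_iff K ε g).mp hg)
  · rintro ⟨m, hm⟩
    have hSle : S ≤ graphToricIdeal K ε :=
      sup_le (map_le_ker K ε _) (map_le_ker K ε _)
    have h0 : aeval (edgeVal K ε) (f ^ m * g) = 0 :=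
      (mem_toric_iff K ε _).mp (hSle hm)
    rw [map_mul, map_pow] at h0
    have hf0 : aeval (edgeVal K ε) f ≠ 0 := by
      classical
      rw [hfm, aeval_monomial_eq]
      intro h
      have := congrArg (coeff (Adeg ε Fo)) h
      rw [coeff_monomial, if_pos rfl, coeff_zero] at this
      exact one_ne_zero this
    rcases mul_eq_zero.mp h0 with h | h
    · exact absurd h (pow_ne_zero m hf0)
    · exact (mem_toric_iff K ε g).mpr h
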